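/- Let p, q, r : Ω → [1,∞] be measurable with 1/q(x) = 1/p(x) + 1/r(x) for all x ∈ Ω. If u ∈ L^{p(x)}(Ω : X) and v ∈ L^{r(x)}(Ω : ℝ), then uv ∈ L^{q(x)}(Ω : X) and ‖uv‖_{q(x)} ≤ 2 ‖u‖_{p(x)} ‖v‖_{r(x)}. -/

import Mathlib

open MeasureTheory Set ENNReal Real
noncomputable section

/-- The Young-type function `φ_{p}(t)`: `t^p` for `p < ∞`, and `0` for `t ≤ 1`, `∞` for `t > 1`
when `p = ∞`. -/
def phiVar (p : ℝ≥0∞) (t : ℝ) : ℝ≥0∞ :=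
  if p = ⊤ then (if t ≤ 1 then 0 else ⊤) else ENNReal.ofReal (t ^ p.toReal)

/-- The modular `ρ(g) = ∫_Ω φ_{p(x)}(g(x)) dx` of a nonnegative function `g`. -/
def rhoVar (p : ℝ → ℝ≥0∞) (Ω : Set ℝ) (g : ℝ → ℝ) : ℝ≥0∞ :=
  ∫⁻ x in Ω, phiVar (p x) (g x)

/-- The Luxemburg norm of `f` on `Ω` with variable exponent `p`. -/
def luxNorm {X : Type*} [NormedAddCommGroup X] (p : ℝ → ℝ≥0∞) (Ω : Set ℝ) (f : ℝ → X) : ℝ :=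
  sInf {lam : ℝ | 0 < lam ∧ rhoVar p Ω (fun x => ‖f x‖ / lam) ≤ 1}

/-- Membership in the variable-exponent Lebesgue space `L^{p(x)}(Ω : X)`. -/
def MemLvar {X : Type*} [NormedAddCommGroup X] (p : ℝ → ℝ≥0∞) (Ω : Set ℝ) (f : ℝ → X) : Prop :=
  AEStronglyMeasurable f (volume.restrict Ω) ∧
    ∃ lam > 0, rhoVar p Ω (fun x => lam * ‖f x‖) < ⊤

/-- Stepanov `p(x)`-boundedness: all translates lie in `L^{p(x)}([0,1]:X)` with uniformly
bounded Luxemburg norms. -/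
def StepanovBounded {X : Type*} [NormedAddCommGroup X] (p : ℝ → ℝ≥0∞) (I : Set ℝ)
    (f : ℝ → X) : Prop :=
  (∀ t ∈ I, MemLvar p (Icc 0 1) (fun s => f (t + s))) ∧
    ∃ C : ℝ, ∀ t ∈ I, luxNorm p (Icc 0 1) (fun s => f (t + s)) ≤ C

/-- The Stepanov `p(x)`-norm `sup_{t ∈ I} ‖f(t+·)‖_{L^{p(x)}[0,1]}`. -/
def stepNorm {X : Type*} [NormedAddCommGroup X] (p : ℝ → ℝ≥0∞) (I : Set ℝ) (f : ℝ → X) : ℝ :=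
  sSup ((fun t => luxNorm p (Icc 0 1) (fun s => f (t + s))) '' I)

/-- `S` is relatively dense in `I`: there is `l > 0` such that every subinterval of `I` of
length `l` meets `S`. -/
def RelDenseIn (I S : Set ℝ) : Prop :=
  ∃ l > 0, ∀ a : ℝ, Icc a (a + l) ⊆ I → (S ∩ Icc a (a + l)).Nonempty

/-- Bohr almost periodicity of `f : I → X`. -/
def AlmostPeriodicOn {X : Type*} [NormedAddCommGroup X] (I : Set ℝ) (f : ℝ → X) : Prop :=
  ContinuousOn f I ∧
    ∀ ε > 0, RelDenseIn I {τ | 0 < τ ∧ ∀ t ∈ I, ‖f (t + τ) - f t‖ ≤ ε}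

/-- Stepanov `p(x)`-almost periodicity: the map `t ↦ f(t+·)` into `L^{p(x)}([0,1]:X)` is
well defined, continuous and almost periodic. -/
def StepanovAP {X : Type*} [NormedAddCommGroup X] (p : ℝ → ℝ≥0∞) (I : Set ℝ) (f : ℝ → X) : Prop :=
  (∀ t ∈ I, MemLvar p (Icc 0 1) (fun s => f (t + s))) ∧
  (∀ t ∈ I, ∀ ε > 0, ∃ δ > 0, ∀ t' ∈ I, |t' - t| < δ →
      luxNorm p (Icc 0 1) (fun s => f (t' + s) - f (t + s)) ≤ ε) ∧
  (∀ ε > 0, RelDenseIn I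
      {τ | 0 < τ ∧ ∀ t ∈ I, luxNorm p (Icc 0 1) (fun s => f (t + τ + s) - f (t + s)) ≤ ε})

section Helpers

lemma phiVar_top_of_le {t : ℝ} (ht : t ≤ 1) : phiVar ⊤ t = 0 := by simp [phiVar, ht]
lemma phiVar_top_of_gt {t : ℝ} (ht : 1 < t) : phiVar ⊤ t = ⊤ := by simp [phiVar, ht.not_ge]
lemma phiVar_ne_top {p : ℝ≥0∞} (h : p ≠ ⊤) (t : ℝ) :
    phiVar p t = ENNReal.ofReal (t ^ p.toReal) := by simp [phiVar, h]
lemma one_le_toReal {p : ℝ≥0∞} (hp : 1 ≤ p) (h : p ≠ ⊤) : 1 ≤ p.toReal := by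
  simpa using ENNReal.toReal_mono h hp

lemma phiVar_scale {p : ℝ≥0∞} (hp : 1 ≤ p) {ε t : ℝ} (hε0 : 0 < ε) (hε1 : ε ≤ 1) (ht : 0 ≤ t) :
    phiVar p (ε * t) ≤ ENNReal.ofReal ε * phiVar p t := by
  rcases eq_or_ne p ⊤ with h | h
  · subst h
    by_cases ht1 : t ≤ 1
    · rw [phiVar_top_of_le (mul_le_one₀ hε1 ht ht1)]; exact zero_le
    · rw [phiVar_top_of_gt (not_le.mp ht1)]
      rw [ENNReal.mul_top (by simpa using hε0.not_ge)]
      exact le_top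
  · rw [phiVar_ne_top h, phiVar_ne_top h]
    have hP : 1 ≤ p.toReal := one_le_toReal hp h
    have h1 : (ε * t) ^ p.toReal = ε ^ p.toReal * t ^ p.toReal :=
      Real.mul_rpow hε0.le ht
    have h2 : ε ^ p.toReal ≤ ε := by
      calc ε ^ p.toReal ≤ ε ^ (1:ℝ) :=
            Real.rpow_le_rpow_of_exponent_ge hε0 hε1 hP
        _ = ε := Real.rpow_one ε
    calc ENNReal.ofReal ((ε * t) ^ p.toReal)
        ≤ ENNReal.ofReal (ε * t ^ p.toReal) := by
          rw [h1]
          exact ENNReal.ofReal_le_ofReal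
            (mul_le_mul_of_nonneg_right h2 (Real.rpow_nonneg ht _))
      _ = ENNReal.ofReal ε * ENNReal.ofReal (t ^ p.toReal) :=
          ENNReal.ofReal_mul hε0.le

lemma measurable_phiVar : Measurable (fun x : ℝ≥0∞ × ℝ => phiVar x.1 x.2) := by
  unfold phiVar
  apply Measurable.ite
  · exact measurable_fst (measurableSet_singleton ⊤)
  · exact Measurable.ite (measurable_snd measurableSet_Iic) measurable_const measurable_const
  · exact ENNReal.measurable_ofReal.comp
      (measurable_snd.pow (ENNReal.measurable_toReal.comp measurable_fst))

lemma real_young {P Q R c d : ℝ} (hP : 0 < P) (hR : 0 < R) (hQP : Q < P) (hQR : Q < R)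
    (hQ : 1 ≤ Q) (h : Q⁻¹ = P⁻¹ + R⁻¹) (hc : 0 ≤ c) (hd : 0 ≤ d) :
    (c * d / 2) ^ Q ≤ (c ^ P + d ^ R) / 2 := by
  have hQ0 : 0 < Q := lt_of_lt_of_le one_pos hQ
  have h2Q : (2:ℝ) ≤ 2 ^ Q := by
    calc (2:ℝ) = 2 ^ (1:ℝ) := (Real.rpow_one 2).symm
      _ ≤ 2 ^ Q := Real.rpow_le_rpow_of_exponent_le one_le_two hQ
  have key : c ^ Q * d ^ Q ≤ c ^ P + d ^ R := by
    have hα : (P / Q).HolderConjugate (R / Q) := by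
      constructor
      · rw [inv_div, inv_div, inv_one, div_eq_mul_inv Q P, div_eq_mul_inv Q R, ← mul_add, ← h,
          mul_inv_cancel₀ hQ0.ne']
      · exact div_pos hP hQ0
      · exact div_pos hR hQ0
    have hy := Real.young_inequality_of_nonneg (Real.rpow_nonneg hc Q)
      (Real.rpow_nonneg hd Q) hα
    have e1 : (c ^ Q) ^ (P / Q) = c ^ P := by
      rw [← Real.rpow_mul hc, mul_div_cancel₀ P hQ0.ne']
    have e2 : (d ^ Q) ^ (R / Q) = d ^ R := by
      rw [← Real.rpow_mul hd, mul_div_cancel₀ R hQ0.ne']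
    rw [e1, e2] at hy
    have hα1 : 1 ≤ P / Q := le_of_lt hα.lt
    have hβ1 : 1 ≤ R / Q := le_of_lt hα.symm.lt
    calc c ^ Q * d ^ Q ≤ c ^ P / (P / Q) + d ^ R / (R / Q) := hy
      _ ≤ c ^ P + d ^ R := by
          gcongr
          · exact div_le_self (Real.rpow_nonneg hc P) hα1
          · exact div_le_self (Real.rpow_nonneg hd R) hβ1
  calc (c * d / 2) ^ Q = (c * d) ^ Q / 2 ^ Q :=
        Real.div_rpow (mul_nonneg hc hd) (by norm_num) Q
    _ ≤ (c * d) ^ Q / 2 :=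
        div_le_div_of_nonneg_left (Real.rpow_nonneg (mul_nonneg hc hd) Q) two_pos h2Q
    _ = c ^ Q * d ^ Q / 2 := by rw [Real.mul_rpow hc hd]
    _ ≤ (c ^ P + d ^ R) / 2 := by gcongr

lemma phiVar_half_le {s : ℝ≥0∞} (hs1 : 1 ≤ s) (hs : s ≠ ⊤) {c d : ℝ}
    (hc : 0 ≤ c) (hc1 : c ≤ 1) (hd : 0 ≤ d) :
    phiVar s (c * d / 2) ≤ phiVar s d / 2 := by
  rw [phiVar_ne_top hs, phiVar_ne_top hs]
  have hS : 1 ≤ s.toReal := one_le_toReal hs1 hs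
  have hS0 : (0:ℝ) < s.toReal := lt_of_lt_of_le one_pos hS
  have h2S : (2:ℝ) ≤ 2 ^ s.toReal := by
    calc (2:ℝ) = 2 ^ (1:ℝ) := (Real.rpow_one 2).symm
      _ ≤ _ := Real.rpow_le_rpow_of_exponent_le one_le_two hS
  have step : (c * d / 2) ^ s.toReal ≤ d ^ s.toReal / 2 := by
    calc (c * d / 2) ^ s.toReal ≤ (d / 2) ^ s.toReal := by
          apply Real.rpow_le_rpow (by positivity) _ hS0.le
          gcongr
          exact mul_le_of_le_one_left hd hc1
      _ = d ^ s.toReal / 2 ^ s.toReal := Real.div_rpow hd (by norm_num) _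
      _ ≤ d ^ s.toReal / 2 :=
          div_le_div_of_nonneg_left (Real.rpow_nonneg hd _) two_pos h2S
  calc ENNReal.ofReal ((c * d / 2) ^ s.toReal) ≤ ENNReal.ofReal (d ^ s.toReal / 2) :=
        ENNReal.ofReal_le_ofReal step
    _ = ENNReal.ofReal (d ^ s.toReal) / 2 := by
        rw [ENNReal.ofReal_div_of_pos two_pos]
        norm_num

lemma phiVar_young {p q r : ℝ≥0∞} (hp : 1 ≤ p) (hq : 1 ≤ q) (hr : 1 ≤ r)
    (h : q⁻¹ = p⁻¹ + r⁻¹) {c d : ℝ} (hc : 0 ≤ c) (hd : 0 ≤ d) :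
    phiVar q (c * d / 2) ≤ (phiVar p c + phiVar r d) / 2 := by
  have hp0 : p ≠ 0 := fun h0 => by simp [h0] at hp
  have hr0 : r ≠ 0 := fun h0 => by simp [h0] at hr
  rcases eq_or_ne q ⊤ with hqT | hqT
  · subst hqT
    rw [ENNReal.inv_top, eq_comm, add_eq_zero, ENNReal.inv_eq_zero, ENNReal.inv_eq_zero] at h
    obtain ⟨hpT, hrT⟩ := h
    subst hpT; subst hrT
    by_cases hc1 : c ≤ 1
    · by_cases hd1 : d ≤ 1
      · rw [phiVar_top_of_le (by nlinarith)]
        exact zero_le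
      · rw [phiVar_top_of_gt (not_le.mp hd1), add_top,
          ENNReal.top_div_of_ne_top (by norm_num)]
        exact le_top
    · rw [phiVar_top_of_gt (not_le.mp hc1), top_add,
        ENNReal.top_div_of_ne_top (by norm_num)]
      exact le_top
  · rcases eq_or_ne p ⊤ with hpT | hpT
    · subst hpT
      rw [ENNReal.inv_top, zero_add] at h
      have hqr : q = r := by rw [← inv_inv q, h, inv_inv]
      subst hqr
      by_cases hc1 : c ≤ 1
      · rw [phiVar_top_of_le hc1, zero_add]
        exact phiVar_half_le hq hqT hc hc1 hd
      · rw [phiVar_top_of_gt (not_le.mp hc1), top_add,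
          ENNReal.top_div_of_ne_top (by norm_num)]
        exact le_top
    · rcases eq_or_ne r ⊤ with hrT | hrT
      · subst hrT
        rw [ENNReal.inv_top, add_zero] at h
        have hqr : q = p := by rw [← inv_inv q, h, inv_inv]
        subst hqr
        by_cases hd1 : d ≤ 1
        · rw [phiVar_top_of_le hd1, add_zero]
          rw [mul_comm c d] at *
          exact phiVar_half_le hp hqT hd hd1 hc
        · rw [phiVar_top_of_gt (not_le.mp hd1), add_top,
            ENNReal.top_div_of_ne_top (by norm_num)]
          exact le_top
      · set P := p.toReal
        set Q := q.toReal
        set R := r.toReal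
        have hP1 : 1 ≤ P := one_le_toReal hp hpT
        have hQ1 : 1 ≤ Q := one_le_toReal hq hqT
        have hR1 : 1 ≤ R := one_le_toReal hr hrT
        have hP0 : 0 < P := lt_of_lt_of_le one_pos hP1
        have hQ0 : 0 < Q := lt_of_lt_of_le one_pos hQ1
        have hR0 : 0 < R := lt_of_lt_of_le one_pos hR1
        have hre : Q⁻¹ = P⁻¹ + R⁻¹ := by
          have := congrArg ENNReal.toReal h
          rwa [ENNReal.toReal_add (ENNReal.inv_ne_top.mpr hp0) (ENNReal.inv_ne_top.mpr hr0),
            ENNReal.toReal_inv, ENNReal.toReal_inv, ENNReal.toReal_inv] at this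
        have hQP : Q < P := by
          have h1 : P⁻¹ < Q⁻¹ := by
            rw [hre]; exact lt_add_of_pos_right _ (by positivity)
          exact (inv_lt_inv₀ hP0 hQ0).mp h1
        have hQR : Q < R := by
          have h1 : R⁻¹ < Q⁻¹ := by
            rw [hre]; exact lt_add_of_pos_left _ (by positivity)
          exact (inv_lt_inv₀ hR0 hQ0).mp h1
        rw [phiVar_ne_top hqT, phiVar_ne_top hpT, phiVar_ne_top hrT]
        calc ENNReal.ofReal ((c * d / 2) ^ Q)
            ≤ ENNReal.ofReal ((c ^ P + d ^ R) / 2) :=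
              ENNReal.ofReal_le_ofReal (real_young hP0 hR0 hQP hQR hQ1 hre hc hd)
          _ = (ENNReal.ofReal (c ^ P) + ENNReal.ofReal (d ^ R)) / 2 := by
              rw [ENNReal.ofReal_div_of_pos two_pos,
                ENNReal.ofReal_add (Real.rpow_nonneg hc _) (Real.rpow_nonneg hd _)]
              norm_num

lemma lux_set_nonempty {X : Type*} [NormedAddCommGroup X] {p : ℝ → ℝ≥0∞} {Ω : Set ℝ}
    {f : ℝ → X} (hp1 : ∀ x, 1 ≤ p x) (hf : MemLvar p Ω f) :
    {lam : ℝ | 0 < lam ∧ rhoVar p Ω (fun x => ‖f x‖ / lam) ≤ 1}.Nonempty := by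
  obtain ⟨-, μ, hμ, hM⟩ := hf
  set M := rhoVar p Ω (fun x => μ * ‖f x‖) with hMdef
  set ε : ℝ := min 1 (M.toReal + 1)⁻¹ with hεdef
  have hε0 : 0 < ε := lt_min one_pos (by positivity)
  have hε1 : ε ≤ 1 := min_le_left _ _
  refine ⟨(ε * μ)⁻¹, by positivity, ?_⟩
  have heq : (fun x => ‖f x‖ / (ε * μ)⁻¹) = fun x => ε * (μ * ‖f x‖) := by
    funext x
    rw [div_eq_mul_inv, inv_inv]
    ring
  rw [heq]
  have hb : rhoVar p Ω (fun x => ε * (μ * ‖f x‖)) ≤ ENNReal.ofReal ε * M := by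
    unfold rhoVar
    calc ∫⁻ x in Ω, phiVar (p x) (ε * (μ * ‖f x‖))
        ≤ ∫⁻ x in Ω, ENNReal.ofReal ε * phiVar (p x) (μ * ‖f x‖) :=
          lintegral_mono fun x => phiVar_scale (hp1 x) hε0 hε1 (by positivity)
      _ = ENNReal.ofReal ε * M := lintegral_const_mul' _ _ ENNReal.ofReal_ne_top
  refine hb.trans ?_
  calc ENNReal.ofReal ε * M
      ≤ ENNReal.ofReal (M.toReal + 1)⁻¹ * ENNReal.ofReal M.toReal := by
        gcongr
        · exact min_le_right _ _
        · rw [ENNReal.ofReal_toReal hM.ne]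
    _ = ENNReal.ofReal ((M.toReal + 1)⁻¹ * M.toReal) :=
        (ENNReal.ofReal_mul (by positivity)).symm
    _ ≤ 1 := by
        rw [← ENNReal.ofReal_one]
        apply ENNReal.ofReal_le_ofReal
        rw [inv_mul_le_iff₀ (by positivity)]
        nlinarith [ENNReal.toReal_nonneg (a := M)]

end Helpers

theorem stmt1 {X : Type*} [NormedAddCommGroup X] [NormedSpace ℝ X] (Ω : Set ℝ) (hΩ : MeasurableSet Ω)
    (p q r : ℝ → ℝ≥0∞) (hpm : Measurable p) (hqm : Measurable q) (hrm : Measurable r)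
    (hp1 : ∀ x, 1 ≤ p x) (hq1 : ∀ x, 1 ≤ q x) (hr1 : ∀ x, 1 ≤ r x)
    (hpqr : ∀ x ∈ Ω, (q x)⁻¹ = (p x)⁻¹ + (r x)⁻¹)
    (u : ℝ → X) (v : ℝ → ℝ) (hu : MemLvar p Ω u) (hv : MemLvar r Ω v) :
    MemLvar q Ω (fun x => v x • u x) ∧
      luxNorm q Ω (fun x => v x • u x) ≤ 2 * luxNorm p Ω u * luxNorm r Ω v := by
  set A := {lam : ℝ | 0 < lam ∧ rhoVar p Ω (fun x => ‖u x‖ / lam) ≤ 1} with hAdef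
  set B := {lam : ℝ | 0 < lam ∧ rhoVar r Ω (fun x => ‖v x‖ / lam) ≤ 1} with hBdef
  have hA : A.Nonempty := lux_set_nonempty hp1 hu
  have hB : B.Nonempty := lux_set_nonempty hr1 hv
  -- the key modular estimate
  have key : ∀ a ∈ A, ∀ b ∈ B,
      rhoVar q Ω (fun x => ‖v x • u x‖ / (2 * a * b)) ≤ 1 := by
    intro a ha b hb
    have ha0 : 0 < a := ha.1
    have hb0 : 0 < b := hb.1
    have hpt : ∀ x ∈ Ω, phiVar (q x) (‖v x • u x‖ / (2 * a * b)) ≤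
        (phiVar (p x) (‖u x‖ / a) + phiVar (r x) (‖v x‖ / b)) / 2 := by
      intro x hx
      have harg : ‖v x • u x‖ / (2 * a * b) = (‖u x‖ / a) * (‖v x‖ / b) / 2 := by
        rw [norm_smul]
        field_simp
      rw [harg]
      exact phiVar_young (hp1 x) (hq1 x) (hr1 x) (hpqr x hx) (by positivity) (by positivity)
    have hmeas : AEMeasurable (fun x => phiVar (p x) (‖u x‖ / a)) (volume.restrict Ω) := by
      have hpair : AEMeasurable (fun x => (p x, ‖u x‖ / a)) (volume.restrict Ω) :=
        (hpm.aemeasurable).prodMk ((hu.1.norm.aemeasurable).div aemeasurable_const)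
      exact measurable_phiVar.comp_aemeasurable hpair
    calc rhoVar q Ω (fun x => ‖v x • u x‖ / (2 * a * b))
        ≤ ∫⁻ x in Ω, (phiVar (p x) (‖u x‖ / a) + phiVar (r x) (‖v x‖ / b)) / 2 :=
          setLIntegral_mono' hΩ hpt
      _ = ∫⁻ x in Ω, 2⁻¹ * (phiVar (p x) (‖u x‖ / a) + phiVar (r x) (‖v x‖ / b)) := by
          simp_rw [ENNReal.div_eq_inv_mul]
      _ = 2⁻¹ * ∫⁻ x in Ω, (phiVar (p x) (‖u x‖ / a) + phiVar (r x) (‖v x‖ / b)) :=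
          lintegral_const_mul' _ _ (by norm_num)
      _ = 2⁻¹ * (rhoVar p Ω (fun x => ‖u x‖ / a) + rhoVar r Ω (fun x => ‖v x‖ / b)) := by
          rw [lintegral_add_left' hmeas]
          rfl
      _ ≤ 2⁻¹ * (1 + 1) := by
          gcongr
          · exact ha.2
          · exact hb.2
      _ = 1 := by
          rw [one_add_one_eq_two]
          exact ENNReal.inv_mul_cancel (by norm_num) (by norm_num)
  have hSbdd : BddBelow {lam : ℝ | 0 < lam ∧
      rhoVar q Ω (fun x => ‖v x • u x‖ / lam) ≤ 1} := ⟨0, fun x hx => hx.1.le⟩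
  have step1 : ∀ a ∈ A, ∀ b ∈ B,
      luxNorm q Ω (fun x => v x • u x) ≤ 2 * a * b := by
    intro a ha b hb
    exact csInf_le hSbdd ⟨mul_pos (mul_pos two_pos ha.1) hb.1, key a ha b hb⟩
  constructor
  · refine ⟨hv.1.smul hu.1, ?_⟩
    obtain ⟨a, ha⟩ := hA
    obtain ⟨b, hb⟩ := hB
    refine ⟨(2 * a * b)⁻¹, inv_pos.mpr (mul_pos (mul_pos two_pos ha.1) hb.1), ?_⟩
    have heq : (fun x => (2 * a * b)⁻¹ * ‖v x • u x‖) =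
        fun x => ‖v x • u x‖ / (2 * a * b) := by
      funext x; rw [inv_mul_eq_div]
    rw [heq]
    exact lt_of_le_of_lt (key a ha b hb) one_lt_top
  · -- norm inequality
    have hA0 : 0 ≤ sInf A := Real.sInf_nonneg fun x hx => hx.1.le
    have hB0 : 0 ≤ sInf B := Real.sInf_nonneg fun x hx => hx.1.le
    have hup : luxNorm p Ω u = sInf A := rfl
    have hvr : luxNorm r Ω v = sInf B := rfl
    rw [hup, hvr]
    have step2 : ∀ b ∈ B, luxNorm q Ω (fun x => v x • u x) ≤ 2 * sInf A * b := by
      intro b hb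
      have hb0 : 0 < b := hb.1
      have hdiv : luxNorm q Ω (fun x => v x • u x) / (2 * b) ≤ sInf A := by
        apply le_csInf hA
        intro a ha
        rw [div_le_iff₀ (by positivity)]
        calc luxNorm q Ω (fun x => v x • u x) ≤ 2 * a * b := step1 a ha b hb
          _ = a * (2 * b) := by ring
      rw [div_le_iff₀ (by positivity)] at hdiv
      calc luxNorm q Ω (fun x => v x • u x) ≤ sInf A * (2 * b) := hdiv
        _ = 2 * sInf A * b := by ring
    rcases eq_or_lt_of_le hA0 with hA0' | hA0'
    · obtain ⟨b, hb⟩ := hB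
      have := step2 b hb
      rw [← hA0'] at this ⊢
      show luxNorm q Ω (fun x => v x • u x) ≤ 2 * 0 * sInf B
      simpa using this
    · have hdiv : luxNorm q Ω (fun x => v x • u x) / (2 * sInf A) ≤ sInf B := by
        apply le_csInf hB
        intro b hb
        rw [div_le_iff₀ (by positivity)]
        calc luxNorm q Ω (fun x => v x • u x) ≤ 2 * sInf A * b := step2 b hb
          _ = b * (2 * sInf A) := by ring
      rw [div_le_iff₀ (by positivity)] at hdiv
      calc luxNorm q Ω (fun x => v x • u x) ≤ sInf B * (2 * sInf A) := hdiv
        _ = 2 * sInf A * sInf B := by ring
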